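/- (Theorem 3, core rank statement) Let F be a global function field of genus g > 0 over F_q with distinct rational places P₁, …, P_s, P_∞, and D a positive divisor with deg D = 2g and supp(D) ∩ {P_∞, P₂, …, P_s} = ∅. Let β_j^{(i)} be as in Lemma 3, and w₁, …, w_g a basis of L(D − P₁) as in Section 4. Suppose m > g, d₁, …, d_s ∈ ℕ₀ with 1 ≤ d₁ + ⋯ + d_s ≤ m − g, b_j^{(i)} ∈ F_q, α := Σ_i Σ_j b_j^{(i)} Σ_f a_{j,n_f}^{(i)} w_f ∈ L(D − P₁), and β := Σ_i Σ_{j≤d_i} b_j^{(i)} β_j^{(i)} − α satisfies ν_{P_∞}(β) ≥ m + g. Then all b_j^{(i)} = 0. -/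
import Mathlib


open scoped BigOperators

/-- An algebraic function field `F` of one variable over the full constant field `K`,
presented through the set of its places: each place `P` has a normalized discrete
valuation `v P` (its value on `0` is irrelevant/junk) and a degree `deg P ≥ 1`.
The axioms are the standard facts: multiplicativity and the ultrametric inequality of
valuations, triviality on constants, finiteness of the support of a principal divisor,
the degree formula `deg(div f) = 0`, the full-constant-field property, and the fact
that places of degree one have residue field `K`. -/
structure FFPlaces (K F : Type*) [Field K] [Field F] [Algebra K F] where
  Place : Type
  v : Place → F → ℤ
  deg : Place → ℕ
  deg_pos : ∀ P, 0 < deg P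
  v_mul : ∀ (P) (x y : F), x ≠ 0 → y ≠ 0 → v P (x * y) = v P x + v P y
  v_add : ∀ (P) (x y : F), x ≠ 0 → y ≠ 0 → x + y ≠ 0 → min (v P x) (v P y) ≤ v P (x + y)
  v_algebraMap : ∀ (P) (c : K), c ≠ 0 → v P (algebraMap K F c) = 0
  finite_support : ∀ f : F, f ≠ 0 → {P | v P f ≠ 0}.Finite
  degree_formula : ∀ f : F, f ≠ 0 → (∑ᶠ P, (deg P : ℤ) * v P f) = 0
  full_constants : ∀ f : F, f ≠ 0 → (∀ P, 0 ≤ v P f) → ∃ c : K, f = algebraMap K F c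
  residue_one : ∀ P, deg P = 1 → ∀ f g : F, f ≠ 0 → g ≠ 0 → v P f = v P g →
      ∃ c : K, f = algebraMap K F c * g ∨ v P f < v P (f - algebraMap K F c * g)

namespace FFPlaces

variable {K F : Type*} [Field K] [Field F] [Algebra K F]

/-- The degree of a divisor (a finitely supported `ℤ`-valued function on places). -/
def degD (FF : FFPlaces K F) (D : FF.Place →₀ ℤ) : ℤ :=
  ∑ P ∈ D.support, (FF.deg P : ℤ) * D P

/-- The Riemann–Roch space `L(D) = {f ∈ F* : div f + D ≥ 0} ∪ {0}` of a divisor `D`,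
as a `K`-subspace of `F`. -/
def RR (FF : FFPlaces K F) (D : FF.Place →₀ ℤ) : Submodule K F where
  carrier := {f | f = 0 ∨ ∀ P, -(D P) ≤ FF.v P f}
  zero_mem' := Or.inl rfl
  add_mem' := by
    intro a b ha hb
    simp only [Set.mem_setOf_eq] at *
    by_cases ha0 : a = 0
    · simpa [ha0] using hb
    by_cases hb0 : b = 0
    · simpa [hb0] using ha
    by_cases hab : a + b = 0
    · exact Or.inl hab
    have ha' := ha.resolve_left ha0
    have hb' := hb.resolve_left hb0
    exact Or.inr fun P =>
      le_trans (le_min (ha' P) (hb' P)) (FF.v_add P a b ha0 hb0 hab)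
  smul_mem' := by
    intro c x hx
    simp only [Set.mem_setOf_eq] at *
    by_cases hc : c = 0
    · left; simp [hc]
    by_cases hx0 : x = 0
    · left; simp [hx0]
    have hx' := hx.resolve_left hx0
    have halg : algebraMap K F c ≠ 0 :=
      (map_ne_zero_iff (algebraMap K F) (RingHom.injective _)).mpr hc
    refine Or.inr fun P => ?_
    rw [Algebra.smul_def, FF.v_mul P _ x halg hx0, FF.v_algebraMap P c hc]
    simpa using hx' P

-- === auxiliary lemmas ===

lemma mem_RR_iff (FF : FFPlaces K F) {E : FF.Place →₀ ℤ} {f : F} :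
    f ∈ FF.RR E ↔ f = 0 ∨ ∀ R, -(E R) ≤ FF.v R f := Iff.rfl

lemma v_smul (FF : FFPlaces K F) (Q : FF.Place) {c : K} (hc : c ≠ 0)
    {x : F} (hx : x ≠ 0) : FF.v Q (c • x) = FF.v Q x := by
  have halg : algebraMap K F c ≠ 0 :=
    (map_ne_zero_iff (algebraMap K F) (RingHom.injective _)).mpr hc
  rw [Algebra.smul_def, FF.v_mul Q _ x halg hx, FF.v_algebraMap Q c hc, zero_add]

lemma v_neg (FF : FFPlaces K F) (Q : FF.Place) {x : F} (hx : x ≠ 0) :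
    FF.v Q (-x) = FF.v Q x := by
  have h1 : ((-1 : K) : K) ≠ 0 := by norm_num
  have := FF.v_smul Q h1 hx
  simpa using this

def Vloc (FF : FFPlaces K F) (Q : FF.Place) (c : ℤ) : Submodule K F where
  carrier := {f | f = 0 ∨ c ≤ FF.v Q f}
  zero_mem' := Or.inl rfl
  add_mem' := by
    intro a b ha hb
    simp only [Set.mem_setOf_eq] at *
    by_cases ha0 : a = 0
    · simpa [ha0] using hb
    by_cases hb0 : b = 0
    · simpa [hb0] using ha
    by_cases hab : a + b = 0
    · exact Or.inl hab
    exact Or.inr (le_trans (le_min (ha.resolve_left ha0) (hb.resolve_left hb0))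
      (FF.v_add Q a b ha0 hb0 hab))
  smul_mem' := by
    intro cc x hx
    simp only [Set.mem_setOf_eq] at *
    by_cases hc : cc = 0
    · exact Or.inl (by simp [hc])
    by_cases hx0 : x = 0
    · exact Or.inl (by simp [hx0])
    exact Or.inr (by rw [FF.v_smul Q hc hx0]; exact hx.resolve_left hx0)

lemma mem_Vloc_iff (FF : FFPlaces K F) {Q : FF.Place} {c : ℤ} {f : F} :
    f ∈ FF.Vloc Q c ↔ f = 0 ∨ c ≤ FF.v Q f := Iff.rfl

lemma RR_le_Vloc (FF : FFPlaces K F) {E : FF.Place →₀ ℤ} {f : F}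
    (hf : f ∈ FF.RR E) (Q : FF.Place) {c : ℤ} (hc : c ≤ -(E Q)) :
    f ∈ FF.Vloc Q c := by
  rcases hf with h | h
  · exact Or.inl h
  · exact Or.inr (le_trans hc (h Q))

lemma vexact (FF : FFPlaces K F) {E1 E2 : FF.Place →₀ ℤ} {Q : FF.Place} {f : F}
    (h1 : f ∈ FF.RR E1) (h2 : f ∉ FF.RR E2) (h : ∀ R, R ≠ Q → E1 R ≤ E2 R) :
    f ≠ 0 ∧ FF.v Q f < -(E2 Q) ∧ -(E1 Q) ≤ FF.v Q f := by
  have hf : f ≠ 0 := by rintro rfl; exact h2 (Or.inl rfl)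
  have h1' := h1.resolve_left hf
  have h2' : ¬ ∀ R, -(E2 R) ≤ FF.v R f := fun hh => h2 (Or.inr hh)
  push_neg at h2'
  obtain ⟨R, hR⟩ := h2'
  by_cases hRQ : R = Q
  · subst hRQ; exact ⟨hf, hR, h1' R⟩
  · exact absurd (le_trans (neg_le_neg (h R hRQ)) (h1' R)) (not_le.mpr hR)

/-- No nonzero function satisfies lower valuation bounds of positive total degree. -/
lemma no_pos_bound (FF : FFPlaces K F) {f : F} (hf : f ≠ 0) (c : FF.Place → ℤ)
    (S : Finset FF.Place) (hc : ∀ R, R ∉ S → c R = 0)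
    (hv : ∀ R, c R ≤ FF.v R f)
    (hpos : 0 < ∑ R ∈ S, (FF.deg R : ℤ) * c R) : False := by
  classical
  set T : Finset FF.Place := S ∪ (FF.finite_support f hf).toFinset with hT
  have hsub : Function.support (fun R => (FF.deg R : ℤ) * FF.v R f) ⊆ ↑T := by
    intro R hR
    simp only [Function.mem_support, mul_ne_zero_iff] at hR
    have : FF.v R f ≠ 0 := hR.2
    simp [hT, Set.Finite.mem_toFinset, this]
  have h0 : (∑ R ∈ T, (FF.deg R : ℤ) * FF.v R f) = 0 := by
    rw [← finsum_eq_sum_of_support_subset _ hsub]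
    exact FF.degree_formula f hf
  have hle : (∑ R ∈ T, (FF.deg R : ℤ) * c R) ≤ ∑ R ∈ T, (FF.deg R : ℤ) * FF.v R f := by
    refine Finset.sum_le_sum fun R _ => ?_
    exact mul_le_mul_of_nonneg_left (hv R) (by positivity)
  have heq : (∑ R ∈ T, (FF.deg R : ℤ) * c R) = ∑ R ∈ S, (FF.deg R : ℤ) * c R := by
    refine (Finset.sum_subset Finset.subset_union_left ?_).symm
    intro R _ hRS
    rw [hc R hRS, mul_zero]
  omega

lemma degD_def (FF : FFPlaces K F) (D : FF.Place →₀ ℤ) :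
    FF.degD D = ∑ P ∈ D.support, (FF.deg P : ℤ) * D P := rfl

end FFPlaces

open Finsupp in
/-- Theorem 3 of the paper (core rank statement). Let `F` be a global function field of
genus `g > 0` over `Fq` with distinct rational places `P 0, …, P (s-1), Pinf` (the
paper's `P₁, …, P_s, P_∞`) and `D` a positive divisor of degree `2g` with support
avoiding `Pinf, P₂, …, P_s`. Let `β_j^{(i)}` be as in Lemma 3, and `w₁, …, w_g` a basis
of `L(D - P₁)` as in Section 4, with `ν_{Pinf}(w_f) = n_f`, `0 ≤ n₁ < ⋯ < n_g < 2g`.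
Suppose `m > g`, `1 ≤ d₁ + ⋯ + d_s ≤ m - g`, and for coefficients
`b_j^{(i)} ∈ Fq` and `a_{j,n_f}^{(i)} ∈ Fq` the element
`β := ∑_i ∑_{j ≤ d_i} b_j^{(i)} β_j^{(i)} - α`, where
`α := ∑_i ∑_{j ≤ d_i} b_j^{(i)} ∑_f a_{j,n_f}^{(i)} w_f ∈ L(D - P₁)`, satisfies
`ν_{Pinf}(β) ≥ m + g` (with the convention `ν_{Pinf}(0) = ∞`).
Then all `b_j^{(i)} = 0`. -/
theorem theorem3_rank (Fq F : Type*) [Field Fq] [Fintype Fq] [Field F] [Algebra Fq F]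
    (FF : FFPlaces Fq F) (g : ℕ) (hg : 0 < g)
    (hRR : ∀ D : FF.Place →₀ ℤ, 2 * (g : ℤ) - 1 ≤ FF.degD D →
      (Module.finrank Fq (FF.RR D) : ℤ) = FF.degD D + 1 - g)
    (s : ℕ) [NeZero s] (hs2 : 2 ≤ s) (P : Fin s → FF.Place)
    (hP : Function.Injective P) (hPdeg : ∀ i, FF.deg (P i) = 1)
    (Pinf : FF.Place) (hPinfdeg : FF.deg Pinf = 1) (hPinfne : ∀ i, Pinf ≠ P i)
    (D : FF.Place →₀ ℤ) (hDpos : ∀ Q, 0 ≤ D Q) (hdegD : FF.degD D = 2 * g)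
    (hDsupp : ∀ i : Fin s, i ≠ 0 → D (P i) = 0) (hDsuppInf : D Pinf = 0)
    (β : Fin s → ℕ → F)
    (hβ1 : ∀ j : ℕ, 1 ≤ j →
      β 0 j ∈ FF.RR (D + single (P 0) ((j : ℤ) - 1) - single (P 1) ((j : ℤ) - 1)) ∧
      β 0 j ∉ FF.RR (D + single (P 0) ((j : ℤ) - 2) - single (P 1) ((j : ℤ) - 1)))
    (hβi : ∀ i : Fin s, i ≠ 0 → ∀ j : ℕ, 1 ≤ j →
      β i j ∈ FF.RR (D + single (P i) (j : ℤ) - single (P 0) (j : ℤ)) ∧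
      β i j ∉ FF.RR (D + single (P i) (j : ℤ) - single (P 0) ((j : ℤ) + 1)) ∧
      β i j ∉ FF.RR (D + single (P i) ((j : ℤ) - 1) - single (P 0) (j : ℤ)))
    (w : Fin g → F) (hwmem : ∀ f, w f ∈ FF.RR (D - single (P 0) 1))
    (hwli : LinearIndependent Fq w)
    (hwspan : Submodule.span Fq (Set.range w) = FF.RR (D - single (P 0) 1))
    (n : Fin g → ℕ) (hn : ∀ f, FF.v Pinf (w f) = (n f : ℤ))
    (hnmono : StrictMono n) (hnlt : ∀ f, n f < 2 * g)
    (m : ℕ) (hm : g < m) (d : Fin s → ℕ)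
    (hd1 : 1 ≤ ∑ i, d i) (hd2 : ∑ i, d i ≤ m - g)
    (b : Fin s → ℕ → Fq) (a : Fin s → ℕ → Fin g → Fq)
    (hval :
      (∑ i, ∑ j ∈ Finset.Icc 1 (d i), b i j • β i j) -
          (∑ i, ∑ j ∈ Finset.Icc 1 (d i), b i j • (∑ f, a i j f • w f)) = 0 ∨
        ((m : ℤ) + g) ≤ FF.v Pinf
          ((∑ i, ∑ j ∈ Finset.Icc 1 (d i), b i j • β i j) -
            (∑ i, ∑ j ∈ Finset.Icc 1 (d i), b i j • (∑ f, a i j f • w f)))) :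
    ∀ (i : Fin s) (j : ℕ), 1 ≤ j → j ≤ d i → b i j = 0 := by
  classical
  have h01 : (0 : Fin s) ≠ 1 := by
    intro h
    have h2 : ((0:Fin s) : ℕ) = ((1:Fin s) : ℕ) := congrArg Fin.val h
    rw [Fin.val_zero, Fin.val_one', Nat.mod_eq_of_lt (by omega)] at h2
    omega
  have hP01 : P 0 ≠ P 1 := fun h => h01 (hP h)
  -- the indicator weight function
  set e : Fin s → ℤ := fun i => if i = 0 then (d 0 : ℤ) - 1 else (d i : ℤ) with he
  set t : FF.Place → ℤ := fun R => ∑ i, if P i = R then e i else 0 with ht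
  have he0 : e 0 = (d 0 : ℤ) - 1 := by simp [he]
  have hei : ∀ i : Fin s, i ≠ 0 → e i = (d i : ℤ) := by
    intro i hi; simp [he, hi]
  have htP : ∀ i, t (P i) = e i := by
    intro i
    rw [ht]
    simp only
    rw [Finset.sum_eq_single i]
    · simp
    · intro i' _ hne
      rw [if_neg]
      intro h
      exact hne (hP h)
    · intro h; exact absurd (Finset.mem_univ i) h
  have htnot : ∀ R, (∀ i, P i ≠ R) → t R = 0 := by
    intro R hR
    rw [ht]
    simp only
    exact Finset.sum_eq_zero fun i _ => if_neg (hR i)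
  have ht0 : ∀ R, R ≠ P 0 → 0 ≤ t R := by
    intro R hR
    rw [ht]
    refine Finset.sum_nonneg fun i _ => ?_
    by_cases h : P i = R
    · rw [if_pos h]
      by_cases h0 : i = 0
      · exact absurd (h0 ▸ h) (fun hh => hR hh.symm)
      · rw [hei i h0]; positivity
    · rw [if_neg h]
  -- the three per-term divisor bounds against D + t
  have hb0E : ∀ (j : ℕ), 1 ≤ j → j ≤ d 0 → ∀ R,
      ((D + single (P 0) ((j : ℤ) - 1) - single (P 1) ((j : ℤ) - 1)) R) ≤ D R + t R := by
    intro j hj1 hjd R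
    simp only [Finsupp.sub_apply, Finsupp.add_apply, Finsupp.single_apply]
    by_cases h0 : P 0 = R
    · have h1 : ¬ P 1 = R := fun h => hP01 (h0.trans h.symm)
      rw [if_pos h0, if_neg h1, ← h0, htP 0, he0]
      omega
    · rw [if_neg h0]
      by_cases h1 : P 1 = R
      · rw [if_pos h1, ← h1, htP 1, hei 1 (Ne.symm h01)]
        omega
      · rw [if_neg h1]
        have := ht0 R (fun h => h0 h.symm)
        omega
  have hbiE : ∀ (i : Fin s), i ≠ 0 → ∀ (j : ℕ), 1 ≤ j → j ≤ d i → ∀ R,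
      ((D + single (P i) (j : ℤ) - single (P 0) (j : ℤ)) R) ≤ D R + t R := by
    intro i hi j hj1 hjd R
    simp only [Finsupp.sub_apply, Finsupp.add_apply, Finsupp.single_apply]
    by_cases h0 : P 0 = R
    · have hiR : ¬ P i = R := fun h => hi (hP (h.trans h0.symm))
      rw [if_neg hiR, if_pos h0, ← h0, htP 0, he0]
      omega
    · by_cases hiR : P i = R
      · rw [if_pos hiR, if_neg h0, ← hiR, htP i, hei i hi]
        omega
      · rw [if_neg hiR, if_neg h0]
        have := ht0 R (fun h => h0 h.symm)
        omega
  have hbwE : ∀ R, ((D - single (P 0) (1 : ℤ)) R) ≤ D R + t R := by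
    intro R
    simp only [Finsupp.sub_apply, Finsupp.single_apply]
    by_cases h0 : P 0 = R
    · rw [if_pos h0, ← h0, htP 0, he0]
      omega
    · rw [if_neg h0]
      have := ht0 R (fun h => h0 h.symm)
      omega
  set LHS : F := (∑ i, ∑ j ∈ Finset.Icc 1 (d i), b i j • β i j) -
      (∑ i, ∑ j ∈ Finset.Icc 1 (d i), b i j • (∑ f, a i j f • w f)) with hLHSdef
  -- a priori membership of LHS in local spaces
  have hLHS_mem : ∀ R, LHS ∈ FF.Vloc R (-(D R) - t R) := by
    intro R
    refine Submodule.sub_mem _ ?_ ?_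
    · refine Submodule.sum_mem _ fun i _ => Submodule.sum_mem _ fun j hj => ?_
      rw [Finset.mem_Icc] at hj
      refine Submodule.smul_mem _ _ ?_
      by_cases hi : i = 0
      · subst hi
        exact FF.RR_le_Vloc ((hβ1 j hj.1).1) R (by have := hb0E j hj.1 hj.2 R; omega)
      · exact FF.RR_le_Vloc ((hβi i hi j hj.1).1) R (by have := hbiE i hi j hj.1 hj.2 R; omega)
    · refine Submodule.sum_mem _ fun i _ => Submodule.sum_mem _ fun j hj => ?_
      refine Submodule.smul_mem _ _ (Submodule.sum_mem _ fun f _ => Submodule.smul_mem _ _ ?_)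
      exact FF.RR_le_Vloc (hwmem f) R (by have := hbwE R; omega)
  -- Step A : LHS = 0
  have hLHS0 : LHS = 0 := by
    rcases hval with h | h
    · exact h
    · by_contra hne
      set c : FF.Place → ℤ := fun R => if R = Pinf then (m : ℤ) + g else -(D R) - t R with hcdef
      set B : Finset FF.Place := Finset.image P Finset.univ ∪ D.support with hBdef
      have hBmemP : ∀ i : Fin s, P i ∈ B := fun i => by
        rw [hBdef]
        exact Finset.mem_union_left _ (Finset.mem_image_of_mem P (Finset.mem_univ i))
      have hBmemD : ∀ R, D R ≠ 0 → R ∈ B := fun R hR => by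
        rw [hBdef]
        exact Finset.mem_union_right _ (Finsupp.mem_support_iff.mpr hR)
      have hPinfB : Pinf ∉ B := by
        rw [hBdef, Finset.mem_union]
        push_neg
        constructor
        · rw [Finset.mem_image]
          push_neg
          exact fun i _ hh => hPinfne i hh.symm
        · rw [Finsupp.mem_support_iff]
          simp [hDsuppInf]
      refine FF.no_pos_bound hne c (insert Pinf B) ?_ ?_ ?_
      · intro R hR
        rw [Finset.mem_insert] at hR
        push_neg at hR
        obtain ⟨hR1, hR2⟩ := hR
        have hR3 : ∀ i, P i ≠ R := fun i hh => hR2 (hh ▸ hBmemP i)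
        have hR4 : D R = 0 := by
          by_contra hh
          exact hR2 (hBmemD R hh)
        rw [hcdef]
        simp only [if_neg hR1]
        rw [hR4, htnot R hR3]
        ring
      · intro R
        by_cases hRinf : R = Pinf
        · subst hRinf
          rw [hcdef]
          simpa using h
        · have := ((FF.mem_Vloc_iff).mp (hLHS_mem R)).resolve_left hne
          rw [hcdef]
          simpa [if_neg hRinf] using this
      · rw [Finset.sum_insert hPinfB, hPinfdeg, hcdef]
        simp only [if_pos rfl]
        have hcB : ∀ R ∈ B, (FF.deg R : ℤ) * (if R = Pinf then (m : ℤ) + g else -(D R) - t R)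
            = -((FF.deg R : ℤ) * D R) - (FF.deg R : ℤ) * t R := by
          intro R hR
          have : R ≠ Pinf := fun hh => hPinfB (hh ▸ hR)
          rw [if_neg this]; ring
        rw [Finset.sum_congr rfl hcB, Finset.sum_sub_distrib, Finset.sum_neg_distrib]
        have hDsum : (∑ R ∈ B, (FF.deg R : ℤ) * D R) = 2 * g := by
          rw [← hdegD, FF.degD_def]
          refine (Finset.sum_subset (hBdef ▸ Finset.subset_union_right) ?_).symm
          intro R _ hRS
          rw [Finsupp.notMem_support_iff.mp hRS, mul_zero]
        have htsum : (∑ R ∈ B, (FF.deg R : ℤ) * t R) = (∑ i, (d i : ℤ)) - 1 := by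
          have h1 : (∑ R ∈ B, (FF.deg R : ℤ) * t R)
              = ∑ R ∈ Finset.image P Finset.univ, (FF.deg R : ℤ) * t R := by
            refine (Finset.sum_subset (hBdef ▸ Finset.subset_union_left) ?_).symm
            intro R _ hRS
            simp only [Finset.mem_image, not_exists] at hRS
            have hR3 : ∀ i, P i ≠ R := by
              intro i hh
              exact hRS i ⟨Finset.mem_univ i, hh⟩
            rw [htnot R hR3, mul_zero]
          rw [h1, Finset.sum_image (fun i _ j _ hh => hP hh)]
          have h2 : ∀ i ∈ Finset.univ, (FF.deg (P i) : ℤ) * t (P i) = e i := by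
            intro i _
            rw [hPdeg i, htP i, Nat.cast_one, one_mul]
          rw [Finset.sum_congr rfl h2]
          have h3 : ∀ i, e i = (d i : ℤ) - (if i = (0 : Fin s) then 1 else 0) := by
            intro i
            by_cases hh : i = 0
            · rw [hh, he0, if_pos rfl]
            · rw [hei i hh, if_neg hh, sub_zero]
          rw [Finset.sum_congr rfl (fun i _ => h3 i), Finset.sum_sub_distrib]
          simp
        rw [hDsum, htsum]
        have hds : (∑ i, (d i : ℤ)) = ((∑ i, d i : ℕ) : ℤ) := by push_cast; ring
        have hd2' : (∑ i, d i) ≤ m - g := hd2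
        rw [hds]
        push_cast
        omega
  -- exact valuations of the β's at their pole places
  have hv0 : ∀ j : ℕ, 1 ≤ j → β 0 j ≠ 0 ∧ FF.v (P 0) (β 0 j) = -(D (P 0)) - j + 1 := by
    intro j hj
    have hPP : ¬ P 1 = P 0 := fun hh => hP01 hh.symm
    obtain ⟨hne, hlt, hge⟩ := FF.vexact (hβ1 j hj).1 (hβ1 j hj).2 (fun R hR => by
      simp only [Finsupp.sub_apply, Finsupp.add_apply, Finsupp.single_apply]
      have : ¬ P 0 = R := fun hh => hR hh.symm
      simp [this])
    refine ⟨hne, ?_⟩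
    have e1 : (D + single (P 0) ((j:ℤ)-1) - single (P 1) ((j:ℤ)-1)) (P 0)
        = D (P 0) + ((j:ℤ)-1) := by
      simp [Finsupp.single_apply, hPP]
    have e2 : (D + single (P 0) ((j:ℤ)-2) - single (P 1) ((j:ℤ)-1)) (P 0)
        = D (P 0) + ((j:ℤ)-2) := by
      simp [Finsupp.single_apply, hPP]
    rw [e1] at hge
    rw [e2] at hlt
    omega
  have hvi : ∀ i : Fin s, i ≠ 0 → ∀ j : ℕ, 1 ≤ j →
      β i j ≠ 0 ∧ FF.v (P i) (β i j) = -(j : ℤ) := by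
    intro i hi j hj
    have hPP : ¬ P 0 = P i := fun hh => hi (hP hh.symm)
    obtain ⟨hne, hlt, hge⟩ := FF.vexact (hβi i hi j hj).1 (hβi i hi j hj).2.2 (fun R hR => by
      simp only [Finsupp.sub_apply, Finsupp.add_apply, Finsupp.single_apply]
      have : ¬ P i = R := fun hh => hR hh.symm
      simp [this])
    refine ⟨hne, ?_⟩
    have hD : D (P i) = 0 := hDsupp i hi
    have e1 : (D + single (P i) (j:ℤ) - single (P 0) (j:ℤ)) (P i) = (j:ℤ) := by
      simp [Finsupp.single_apply, hPP, hD]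
    have e2 : (D + single (P i) ((j:ℤ)-1) - single (P 0) (j:ℤ)) (P i) = (j:ℤ)-1 := by
      simp [Finsupp.single_apply, hPP, hD]
    rw [e1] at hge
    rw [e2] at hlt
    omega
  -- the key cancellation step
  have key : ∀ (i : Fin s) (j : ℕ), 1 ≤ j → j ≤ d i →
      (∀ j', j < j' → j' ≤ d i → b i j' = 0) → b i j = 0 := by
    intro i j hj1 hjd hhi
    by_contra hbne
    have hβQ : β i j ≠ 0 ∧ FF.v (P i) (β i j)
        = (if i = 0 then -(D (P 0)) - j + 1 else -(j : ℤ)) := by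
      by_cases hi : i = 0
      · subst hi; simpa using hv0 j hj1
      · simpa [hi] using hvi i hi j hj1
    obtain ⟨hβne, hvβ⟩ := hβQ
    set vβ : ℤ := if i = 0 then -(D (P 0)) - j + 1 else -(j : ℤ) with hvβdef
    have hvβ0 : i = 0 → vβ = -(D (P 0)) - j + 1 := fun h => by rw [hvβdef, if_pos h]
    have hvβi : i ≠ 0 → vβ = -(j : ℤ) := fun h => by rw [hvβdef, if_neg h]
    set T : F := LHS - b i j • β i j with hTdef
    have hbT : b i j • β i j = -T := by rw [hTdef, hLHS0]; ring
    -- T lies in Vloc (P i) (vβ + 1)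
    have hT : T ∈ FF.Vloc (P i) (vβ + 1) := by
      have hsplit : (∑ i', ∑ j' ∈ Finset.Icc 1 (d i'), b i' j' • β i' j')
          = b i j • β i j + ((∑ j' ∈ (Finset.Icc 1 (d i)).erase j, b i j' • β i j')
            + ∑ i' ∈ Finset.univ.erase i, ∑ j' ∈ Finset.Icc 1 (d i'), b i' j' • β i' j') := by
        rw [← Finset.add_sum_erase _ (fun i' => ∑ j' ∈ Finset.Icc 1 (d i'), b i' j' • β i' j')
          (Finset.mem_univ i),
          ← Finset.add_sum_erase _ (fun j' => b i j' • β i j')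
          (Finset.mem_Icc.mpr ⟨hj1, hjd⟩)]
        ring
      have hTeq : T = ((∑ j' ∈ (Finset.Icc 1 (d i)).erase j, b i j' • β i j')
            + ∑ i' ∈ Finset.univ.erase i, ∑ j' ∈ Finset.Icc 1 (d i'), b i' j' • β i' j')
          - (∑ i', ∑ j' ∈ Finset.Icc 1 (d i'), b i' j' • (∑ f, a i' j' f • w f)) := by
        rw [hTdef, hLHSdef, hsplit]; ring
      rw [hTeq]
      refine Submodule.sub_mem _ (Submodule.add_mem _ ?_ ?_) ?_
      · -- same i, other j'
        refine Submodule.sum_mem _ fun j' hj' => ?_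
        rw [Finset.mem_erase, Finset.mem_Icc] at hj'
        obtain ⟨hne', hj'1, hj'd⟩ := hj'
        rcases lt_or_gt_of_ne hne' with hlt | hgt
        · refine Submodule.smul_mem _ _ ?_
          rw [FF.mem_Vloc_iff]
          by_cases hi : i = 0
          · subst hi
            obtain ⟨hne0, hv0'⟩ := hv0 j' hj'1
            refine Or.inr ?_
            rw [hv0', hvβ0 rfl]
            omega
          · obtain ⟨hne0, hvi'⟩ := hvi i hi j' hj'1
            refine Or.inr ?_
            rw [hvi', hvβi hi]
            omega
        · rw [hhi j' hgt hj'd, zero_smul]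
          exact Submodule.zero_mem _
      · -- other i'
        refine Submodule.sum_mem _ fun i' hi' => Submodule.sum_mem _ fun j' hj' =>
          Submodule.smul_mem _ _ ?_
        rw [Finset.mem_erase] at hi'
        rw [Finset.mem_Icc] at hj'
        by_cases hI0 : i' = 0
        · subst hI0
          have hi0 : i ≠ 0 := fun hh => hi'.1 hh.symm
          refine FF.RR_le_Vloc (hβ1 j' hj'.1).1 (P i) ?_
          have hPP : ¬ P 0 = P i := fun hh => hi0 (hP hh.symm)
          have hE : (D + single (P 0) ((j':ℤ)-1) - single (P 1) ((j':ℤ)-1)) (P i)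
              = D (P i) - (if P 1 = P i then (j':ℤ)-1 else 0) := by
            simp only [Finsupp.sub_apply, Finsupp.add_apply, Finsupp.single_apply,
              if_neg hPP, sub_zero]
            split_ifs <;> ring
          rw [hE, hvβi hi0, hDsupp i hi0]
          by_cases h1i : P 1 = P i
          · rw [if_pos h1i]
            have := hj'.1
            omega
          · rw [if_neg h1i]
            omega
        · refine FF.RR_le_Vloc (hβi i' hI0 j' hj'.1).1 (P i) ?_
          have hPP : ¬ P i' = P i := fun hh => hi'.1 (hP hh)
          have hE : (D + single (P i') (j':ℤ) - single (P 0) (j':ℤ)) (P i)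
              = D (P i) - (if P 0 = P i then (j':ℤ) else 0) := by
            simp [Finsupp.single_apply, hPP]
          rw [hE]
          by_cases hi0 : i = 0
          · rw [hvβ0 hi0]
            subst hi0
            rw [if_pos rfl]
            have := hj'.1
            omega
          · rw [if_neg (fun hh : P 0 = P i => hi0 (hP hh.symm)), hDsupp i hi0, hvβi hi0]
            omega
      · -- the w part
        refine Submodule.sum_mem _ fun i' _ => Submodule.sum_mem _ fun j' _ =>
          Submodule.smul_mem _ _ (Submodule.sum_mem _ fun f _ => Submodule.smul_mem _ _ ?_)
        refine FF.RR_le_Vloc (hwmem f) (P i) ?_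
        have hE : (D - single (P 0) (1:ℤ)) (P i)
            = D (P i) - (if P 0 = P i then (1:ℤ) else 0) := by
          simp [Finsupp.single_apply]
        rw [hE]
        by_cases hi0 : i = 0
        · rw [hvβ0 hi0]
          subst hi0
          rw [if_pos rfl]
          omega
        · rw [if_neg (fun hh : P 0 = P i => hi0 (hP hh.symm)), hDsupp i hi0, hvβi hi0]
          omega
    by_cases hT0 : T = 0
    · rw [hT0, neg_zero] at hbT
      rcases smul_eq_zero.mp hbT with hb0' | hβ0'
      · exact hbne hb0'
      · exact hβne hβ0'
    · have hvT : vβ + 1 ≤ FF.v (P i) T := ((FF.mem_Vloc_iff).mp hT).resolve_left hT0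
      have h1 : FF.v (P i) (b i j • β i j) = vβ := by rw [FF.v_smul (P i) hbne hβne, hvβ]
      have h2 : FF.v (P i) (b i j • β i j) = FF.v (P i) T := by
        rw [hbT, FF.v_neg (P i) hT0]
      omega
  -- downward induction wrapper
  have wrap : ∀ (k : ℕ) (i : Fin s) (j : ℕ), 1 ≤ j → j ≤ d i → d i ≤ j + k → b i j = 0 := by
    intro k
    induction k with
    | zero =>
        intro i j h1 h2 h3
        exact key i j h1 h2 (fun j' hj' hj'd => absurd hj'd (by omega))
    | succ k ih =>
        intro i j h1 h2 h3
        exact key i j h1 h2 (fun j' hj' hj'd => ih i j' (by omega) hj'd (by omega))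
  intro i j hj1 hjd
  exact wrap (d i) i j hj1 hjd (by omega)
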